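/- Let y_0, y_1, y_2, y_3 be nonzero integers with y_0 + y_1 + y_2 + y_3 = 0, pairwise coprime, and such that none of y_0+y_1, y_0+y_2, y_1+y_3 vanishes. Define x_0 = y_1y_2y_3, x_1 = y_0y_2y_3, x_2 = y_0y_1y_3, x_3 = y_0y_1y_2. Then (x_0,x_1,x_2,x_3) satisfies x_1x_2x_3 + x_0x_2x_3 + x_0x_1x_3 + x_0x_1x_2 = 0, gcd(x_0,x_1,x_2,x_3) = 1, and no two of x_0,x_1,x_2,x_3 sum to zero. -/

import Mathlib

/-- Universal torsor parametrisation of the Cayley cubic with all `z`-variables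
equal to 1: pairwise coprime nonzero integers `y₀,…,y₃` summing to zero, with
`y₀+y₁, y₀+y₂, y₁+y₃` all nonzero, give a primitive integral point on the Cayley
cubic off the lines. -/
theorem stmt_5 (y0 y1 y2 y3 : ℤ)
    (hy0 : y0 ≠ 0) (hy1 : y1 ≠ 0) (hy2 : y2 ≠ 0) (hy3 : y3 ≠ 0)
    (hsum : y0 + y1 + y2 + y3 = 0)
    (h01 : IsCoprime y0 y1) (h02 : IsCoprime y0 y2) (h03 : IsCoprime y0 y3)
    (h12 : IsCoprime y1 y2) (h13 : IsCoprime y1 y3) (h23 : IsCoprime y2 y3)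
    (hl1 : y0 + y1 ≠ 0) (hl2 : y0 + y2 ≠ 0) (hl3 : y1 + y3 ≠ 0) :
    let x0 := y1 * y2 * y3
    let x1 := y0 * y2 * y3
    let x2 := y0 * y1 * y3
    let x3 := y0 * y1 * y2
    x1 * x2 * x3 + x0 * x2 * x3 + x0 * x1 * x3 + x0 * x1 * x2 = 0 ∧
    Int.gcd (Int.gcd (Int.gcd x0 x1) x2) x3 = 1 ∧
    x0 + x1 ≠ 0 ∧ x0 + x2 ≠ 0 ∧ x0 + x3 ≠ 0 ∧
    x1 + x2 ≠ 0 ∧ x1 + x3 ≠ 0 ∧ x2 + x3 ≠ 0 := by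
  intro x0 x1 x2 x3
  -- the extra line condition
  have h03' : y0 + y3 ≠ 0 := by
    intro h
    have h12' : y1 + y2 = 0 := by omega
    have hu1 : IsUnit y1 := h12.isUnit_of_dvd' dvd_rfl ⟨-1, by omega⟩
    have hu0 : IsUnit y0 := h03.isUnit_of_dvd' dvd_rfl ⟨-1, by omega⟩
    rcases Int.isUnit_iff.mp hu1 with rfl | rfl <;>
      rcases Int.isUnit_iff.mp hu0 with rfl | rfl <;> omega
  refine ⟨by simp only [x0, x1, x2, x3]; linear_combination y0^2*y1^2*y2^2*y3^2 * hsum, ?_, ?_, ?_, ?_, ?_, ?_, ?_⟩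
  · -- gcd = 1
    by_contra hne
    obtain ⟨p, hp, hpd⟩ := Nat.exists_prime_and_dvd hne
    have hpZ : Prime (p : ℤ) := Nat.prime_iff_prime_int.mp hp
    have dG : (p : ℤ) ∣ (↑(Int.gcd (Int.gcd (Int.gcd x0 x1) x2) x3) : ℤ) :=
      Int.natCast_dvd_natCast.mpr hpd
    have d3 : (p : ℤ) ∣ x3 := dG.trans (Int.gcd_dvd_right _ _)
    have dG2 : (p : ℤ) ∣ (↑(Int.gcd (Int.gcd x0 x1) x2) : ℤ) :=
      dG.trans (Int.gcd_dvd_left _ _)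
    have d2 : (p : ℤ) ∣ x2 := dG2.trans (Int.gcd_dvd_right _ _)
    have dG1 : (p : ℤ) ∣ (↑(Int.gcd x0 x1) : ℤ) := dG2.trans (Int.gcd_dvd_left _ _)
    have d0 : (p : ℤ) ∣ x0 := dG1.trans (Int.gcd_dvd_left _ _)
    have d1 : (p : ℤ) ∣ x1 := dG1.trans (Int.gcd_dvd_right _ _)
    -- p divides x3 = y0*y1*y2, so p divides one of y0, y1, y2
    have key : ∀ a b : ℤ, (p : ℤ) ∣ a → (p : ℤ) ∣ b → IsCoprime a b → False := by
      intro a b ha hb hco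
      exact hpZ.not_unit (hco.isUnit_of_dvd' ha hb)
    rcases (hpZ.dvd_mul.mp d3) with h | hc2
    · rcases hpZ.dvd_mul.mp h with hc0 | hc1
      · -- p ∣ y0 ; but p ∣ x0 = y1*y2*y3
        rcases hpZ.dvd_mul.mp d0 with h' | hc3
        · rcases hpZ.dvd_mul.mp h' with hc1 | hc2
          · exact key _ _ hc0 hc1 h01
          · exact key _ _ hc0 hc2 h02
        · exact key _ _ hc0 hc3 h03
      · -- p ∣ y1 ; but p ∣ x1 = y0*y2*y3
        rcases hpZ.dvd_mul.mp d1 with h' | hc3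
        · rcases hpZ.dvd_mul.mp h' with hc0 | hc2
          · exact key _ _ hc0 hc1 h01
          · exact key _ _ hc1 hc2 h12
        · exact key _ _ hc1 hc3 h13
    · -- p ∣ y2 ; but p ∣ x2 = y0*y1*y3
      rcases hpZ.dvd_mul.mp d2 with h' | hc3
      · rcases hpZ.dvd_mul.mp h' with hc0 | hc1
        · exact key _ _ hc0 hc2 h02
        · exact key _ _ hc1 hc2 h12
      · exact key _ _ hc2 hc3 h23
  · -- x0 + x1 = y2*y3*(y0+y1)
    have : x0 + x1 = y2 * y3 * (y0 + y1) := by simp only [x0, x1]; ring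
    rw [this]; exact mul_ne_zero (mul_ne_zero hy2 hy3) hl1
  · have : x0 + x2 = y1 * y3 * (y0 + y2) := by simp only [x0, x2]; ring
    rw [this]; exact mul_ne_zero (mul_ne_zero hy1 hy3) hl2
  · have : x0 + x3 = y1 * y2 * (y0 + y3) := by simp only [x0, x3]; ring
    rw [this]; exact mul_ne_zero (mul_ne_zero hy1 hy2) h03'
  · have : x1 + x2 = y0 * y3 * (y1 + y2) := by simp only [x1, x2]; ring
    rw [this]
    exact mul_ne_zero (mul_ne_zero hy0 hy3) (by omega)
  · have : x1 + x3 = y0 * y2 * (y1 + y3) := by simp only [x1, x3]; ring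
    rw [this]; exact mul_ne_zero (mul_ne_zero hy0 hy2) hl3
  · have : x2 + x3 = y0 * y1 * (y2 + y3) := by simp only [x2, x3]; ring
    rw [this]
    exact mul_ne_zero (mul_ne_zero hy0 hy1) (by omega)
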